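/- Consider a stochastic shortest path model with finite state space Fin N (N ≥ 1), a nonempty finite action set A s for each state s, costs c : (s : Fin N) → A s → ℝ, and transitions P : (s : Fin N) → A s → Fin N → ℝ with P s a s' ≥ 0 and ∑_{s'} P s a s' ≤ 1 for all s, a. Let x : Fin N → ℝ be superharmonic, i.e., x s ≤ c s a + ∑_{s'} P s a s' · x s' for all s and all a ∈ A s. If π is a stationary policy such that the matrix powers (P_π)^k converge entrywise to 0 as k → ∞, then I − P_π is invertible and x ≤ (I − P_π)⁻¹ · c_π componentwise. -/

import Mathlib

open Filter Topology

theorem stmt_5 (N : ℕ) (hN : 0 < N) (A : Fin N → Type)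
    [∀ s, Fintype (A s)] [∀ s, Nonempty (A s)]
    (c : ∀ s, A s → ℝ) (P : ∀ s, A s → Fin N → ℝ)
    (hP_nonneg : ∀ s a s', 0 ≤ P s a s')
    (hP_sub : ∀ s a, ∑ s', P s a s' ≤ 1)
    (x : Fin N → ℝ)
    (hx : ∀ s, ∀ a : A s, x s ≤ c s a + ∑ s', P s a s' * x s')
    (π : ∀ s, A s)
    (hπ : ∀ i j, Tendsto
      (fun k => ((Matrix.of fun s₁ s₂ => P s₁ (π s₁) s₂) ^ k) i j) atTop (𝓝 0)) :
    IsUnit (1 - Matrix.of fun s₁ s₂ => P s₁ (π s₁) s₂) ∧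
    ∀ s, x s ≤
      (1 - Matrix.of fun s₁ s₂ => P s₁ (π s₁) s₂)⁻¹.mulVec (fun s₀ => c s₀ (π s₀)) s := by
  set Q : Matrix (Fin N) (Fin N) ℝ := Matrix.of fun s₁ s₂ => P s₁ (π s₁) s₂ with hQ
  set cπ : Fin N → ℝ := fun s₀ => c s₀ (π s₀) with hcπ
  -- entrywise convergence of powers
  have hπ' : ∀ i j, Tendsto (fun k => (Q ^ k) i j) atTop (𝓝 0) := hπ
  -- invertibility
  have hunit : IsUnit (1 - Q) := by
    rw [Matrix.isUnit_iff_isUnit_det, isUnit_iff_ne_zero]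
    intro hdet
    obtain ⟨v, hv0, hv⟩ := (Matrix.exists_mulVec_eq_zero_iff).mpr hdet
    have hQv : Q.mulVec v = v := by
      rw [Matrix.sub_mulVec, Matrix.one_mulVec, sub_eq_zero] at hv
      exact hv.symm
    have hpow : ∀ k, (Q ^ k).mulVec v = v := by
      intro k
      induction k with
      | zero => simp [Matrix.one_mulVec]
      | succ k ih => rw [pow_succ', ← Matrix.mulVec_mulVec, ih, hQv]
    apply hv0
    funext i
    have h1 : Tendsto (fun k => ((Q ^ k).mulVec v) i) atTop (𝓝 0) := by
      have : Tendsto (fun k => ∑ j, (Q ^ k) i j * v j) atTop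
          (𝓝 (∑ j : Fin N, (0 : ℝ) * v j)) :=
        tendsto_finset_sum _ fun j _ => (hπ' i j).mul tendsto_const_nhds
      simpa [Matrix.mulVec, dotProduct] using this
    have h2 : Tendsto (fun k => ((Q ^ k).mulVec v) i) atTop (𝓝 (v i)) := by
      simp only [hpow]; exact tendsto_const_nhds
    exact tendsto_nhds_unique h2 h1
  refine ⟨hunit, ?_⟩
  have hQnn : ∀ i j, 0 ≤ Q i j := fun i j => hP_nonneg i (π i) j
  -- key inequality by induction
  have key : ∀ k s, x s ≤ ((∑ j ∈ Finset.range k, Q ^ j).mulVec cπ) s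
      + ((Q ^ k).mulVec x) s := by
    intro k
    induction k with
    | zero =>
      intro s
      simp [Matrix.one_mulVec]
    | succ k ih =>
      intro s
      have h1 : x s ≤ cπ s + ∑ s', Q s s' * x s' := hx s (π s)
      have h2 : ∑ s', Q s s' * x s' ≤
          ∑ s', Q s s' * (((∑ j ∈ Finset.range k, Q ^ j).mulVec cπ) s'
            + ((Q ^ k).mulVec x) s') := by
        apply Finset.sum_le_sum
        intro s' _
        exact mul_le_mul_of_nonneg_left (ih s') (hQnn s s')
      have h3 : ∑ s', Q s s' * (((∑ j ∈ Finset.range k, Q ^ j).mulVec cπ) s'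
            + ((Q ^ k).mulVec x) s')
          = ((Q * (∑ j ∈ Finset.range k, Q ^ j)).mulVec cπ) s
            + ((Q ^ (k + 1)).mulVec x) s := by
        have e1 : ((Q * (∑ j ∈ Finset.range k, Q ^ j)).mulVec cπ) s
            = ∑ s', Q s s' * ((∑ j ∈ Finset.range k, Q ^ j).mulVec cπ) s' := by
          rw [← Matrix.mulVec_mulVec]
          rfl
        have e2 : ((Q ^ (k + 1)).mulVec x) s
            = ∑ s', Q s s' * ((Q ^ k).mulVec x) s' := by
          rw [pow_succ', ← Matrix.mulVec_mulVec]
          rfl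
        rw [e1, e2]
        simp [mul_add, Finset.sum_add_distrib]
      have h4 : (∑ j ∈ Finset.range (k + 1), Q ^ j)
          = 1 + Q * ∑ j ∈ Finset.range k, Q ^ j := by
        rw [Finset.sum_range_succ', Finset.mul_sum]
        simp [pow_succ', add_comm]
      calc x s ≤ cπ s + ∑ s', Q s s' * x s' := h1
        _ ≤ cπ s + (((Q * (∑ j ∈ Finset.range k, Q ^ j)).mulVec cπ) s
            + ((Q ^ (k + 1)).mulVec x) s) := by
            rw [← h3]; exact add_le_add_right h2 _
        _ = ((∑ j ∈ Finset.range (k + 1), Q ^ j).mulVec cπ) s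
            + ((Q ^ (k + 1)).mulVec x) s := by
            rw [h4, Matrix.add_mulVec, Matrix.one_mulVec, Pi.add_apply, add_assoc]
  -- geometric sum formula
  have hinv : (1 - Q) * (1 - Q)⁻¹ = 1 :=
    Matrix.mul_nonsing_inv _ ((Matrix.isUnit_iff_isUnit_det _).mp hunit)
  have hgeom : ∀ k, (∑ j ∈ Finset.range k, Q ^ j) = (1 - Q ^ k) * (1 - Q)⁻¹ := by
    intro k
    have h := geom_sum_mul Q k
    have h2 : (∑ j ∈ Finset.range k, Q ^ j) * (1 - Q) = 1 - Q ^ k := by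
      rw [← neg_sub Q 1, mul_neg, h, neg_sub]
    calc (∑ j ∈ Finset.range k, Q ^ j)
        = (∑ j ∈ Finset.range k, Q ^ j) * ((1 - Q) * (1 - Q)⁻¹) := by rw [hinv, mul_one]
      _ = ((∑ j ∈ Finset.range k, Q ^ j) * (1 - Q)) * (1 - Q)⁻¹ := by rw [mul_assoc]
      _ = (1 - Q ^ k) * (1 - Q)⁻¹ := by rw [h2]
  have hent : ∀ i j, Tendsto (fun k => ((1 - Q ^ k) : Matrix (Fin N) (Fin N) ℝ) i j)
      atTop (𝓝 ((1 : Matrix (Fin N) (Fin N) ℝ) i j)) := by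
    intro i j
    have := (tendsto_const_nhds (x := (1 : Matrix (Fin N) (Fin N) ℝ) i j)
      (f := atTop (α := ℕ))).sub (hπ' i j)
    simpa [Matrix.sub_apply] using this
  intro s
  have hS : Tendsto (fun k => ((∑ j ∈ Finset.range k, Q ^ j).mulVec cπ) s) atTop
      (𝓝 (((1 - Q)⁻¹.mulVec cπ) s)) := by
    have h1 : Tendsto
        (fun k => ∑ j, (∑ m, ((1 - Q ^ k) : Matrix (Fin N) (Fin N) ℝ) s m
          * (1 - Q)⁻¹ m j) * cπ j) atTop
        (𝓝 (∑ j, (∑ m, (1 : Matrix (Fin N) (Fin N) ℝ) s m * (1 - Q)⁻¹ m j) * cπ j)) :=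
      tendsto_finset_sum _ fun j _ =>
        (tendsto_finset_sum _ fun m _ => (hent s m).mul tendsto_const_nhds).mul
          tendsto_const_nhds
    have e1 : ∀ k, ((∑ j ∈ Finset.range k, Q ^ j).mulVec cπ) s
        = ∑ j, (∑ m, ((1 - Q ^ k) : Matrix (Fin N) (Fin N) ℝ) s m
          * (1 - Q)⁻¹ m j) * cπ j := by
      intro k
      rw [hgeom k]
      simp [Matrix.mulVec, dotProduct, Matrix.mul_apply]
    have e2 : ((1 - Q)⁻¹.mulVec cπ) s
        = ∑ j, (∑ m, (1 : Matrix (Fin N) (Fin N) ℝ) s m * (1 - Q)⁻¹ m j) * cπ j := by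
      have : ∀ j, (∑ m, (1 : Matrix (Fin N) (Fin N) ℝ) s m * (1 - Q)⁻¹ m j)
          = (1 - Q)⁻¹ s j := by
        intro j
        have := Matrix.one_mul (1 - Q)⁻¹
        calc (∑ m, (1 : Matrix (Fin N) (Fin N) ℝ) s m * (1 - Q)⁻¹ m j)
            = ((1 : Matrix (Fin N) (Fin N) ℝ) * (1 - Q)⁻¹) s j := by
              rw [Matrix.mul_apply]
          _ = (1 - Q)⁻¹ s j := by rw [Matrix.one_mul]
      simp only [this]
      rfl
    rw [e2]
    simpa only [e1] using h1
  have hX : Tendsto (fun k => ((Q ^ k).mulVec x) s) atTop (𝓝 0) := by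
    have : Tendsto (fun k => ∑ j, (Q ^ k) s j * x j) atTop
        (𝓝 (∑ j : Fin N, (0 : ℝ) * x j)) :=
      tendsto_finset_sum _ fun j _ => (hπ' s j).mul tendsto_const_nhds
    simpa [Matrix.mulVec, dotProduct] using this
  have hlim : Tendsto (fun k => ((∑ j ∈ Finset.range k, Q ^ j).mulVec cπ) s
      + ((Q ^ k).mulVec x) s) atTop (𝓝 (((1 - Q)⁻¹.mulVec cπ) s + 0)) := hS.add hX
  rw [add_zero] at hlim
  exact ge_of_tendsto' hlim (fun k => key k s)
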